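/- Let N ∈ ℕ with N ≥ 2 and let α₁, b₁, b₂, …, b_N ∈ ℤ be such that b_j ≠ 0 for some j ∈ {2, …, N} and gcd(α₁, b₁, b₂, …, b_N) = 1. Then there exists x ∈ ℤ with gcd(x·α₁ + b₁, b₂, …, b_N) = 1. -/

import Mathlib

lemma key (a c n : ℤ) (hn : n ≠ 0) (h : gcd a (gcd c n) = 1) :
    ∃ x : ℤ, gcd (x * a + c) n = 1 := by
  set m := n.natAbs with hm
  have hm0 : m ≠ 0 := Int.natAbs_ne_zero.mpr hn
  set P : ℕ := ∏ p ∈ m.primeFactors.filter (fun p : ℕ => ¬ ((p : ℤ) ∣ c)), p with hP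
  refine ⟨(P : ℤ), ?_⟩
  rw [← Int.coe_gcd]
  by_contra hne
  have h1 : Int.gcd ((P : ℤ) * a + c) n ≠ 1 := fun h1 => hne (by rw [h1]; rfl)
  have h0 : Int.gcd ((P : ℤ) * a + c) n ≠ 0 := by
    simp [Int.gcd_eq_zero_iff, hn]
  obtain ⟨p, hp, hpd⟩ := Nat.exists_prime_and_dvd h1
  have hpz : Prime (p : ℤ) := Nat.prime_iff_prime_int.mp hp
  have hpn : (p : ℤ) ∣ n :=
    dvd_trans (Int.natCast_dvd_natCast.mpr hpd) (Int.gcd_dvd_right _ _)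
  have hpc : (p : ℤ) ∣ (P : ℤ) * a + c :=
    dvd_trans (Int.natCast_dvd_natCast.mpr hpd) (Int.gcd_dvd_left _ _)
  have hdvdP : ∀ q : ℕ, q.Prime → q ∣ P → ¬ ((q : ℤ) ∣ c) := by
    intro q hq hqP
    have := (Prime.dvd_finset_prod_iff (Nat.Prime.prime hq) (fun x : ℕ => x)).mp hqP
    obtain ⟨r, hr, hqr⟩ := this
    simp only [Finset.mem_filter, Nat.mem_primeFactors] at hr
    have : q = r := ((Nat.prime_dvd_prime_iff_eq hq hr.1.1).mp hqr)
    subst this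
    exact hr.2
  by_cases hc : (p : ℤ) ∣ c
  · -- p ∤ a, p ∤ P, contradiction with p ∣ P*a
    have hpa : ¬ ((p : ℤ) ∣ a) := by
      intro hpa
      have : (p : ℤ) ∣ gcd a (gcd c n) := dvd_gcd hpa (dvd_gcd hc hpn)
      rw [h] at this
      exact hpz.not_unit (isUnit_of_dvd_one this)
    have hpP : ¬ ((p : ℤ) ∣ (P : ℤ)) := by
      rw [Int.natCast_dvd_natCast]
      intro hpP
      exact hdvdP p hp hpP hc
    have : (p : ℤ) ∣ (P : ℤ) * a := (dvd_add_right hc).mp (by rwa [add_comm] at hpc)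
    rcases hpz.dvd_mul.mp this with h' | h'
    · exact hpP h'
    · exact hpa h'
  · -- p ∈ filter, p ∣ P, so p ∣ c, contradiction
    have hpP : p ∣ P := Finset.dvd_prod_of_mem _ (by
      simp only [Finset.mem_filter, Nat.mem_primeFactors]
      refine ⟨⟨hp, ?_, hm0⟩, hc⟩
      simpa using Int.natAbs_dvd_natAbs.mpr hpn)
    have : (p : ℤ) ∣ c := by
      have h1 : (p : ℤ) ∣ (P : ℤ) * a := Dvd.dvd.mul_right (Int.natCast_dvd_natCast.mpr hpP) a
      have := dvd_sub hpc h1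
      simpa using this
    exact hc this

theorem stmt_10 (N : ℕ) (hN : 2 ≤ N) (α : ℤ) (b : Fin N → ℤ)
    (hb : ∃ j : Fin N, j ≠ (⟨0, by omega⟩ : Fin N) ∧ b j ≠ 0)
    (hgcd : gcd α (Finset.univ.gcd b) = 1) :
    ∃ x : ℤ,
      Finset.univ.gcd
        (Function.update b (⟨0, by omega⟩ : Fin N) (x * α + b ⟨0, by omega⟩)) = 1 := by
  set z : Fin N := ⟨0, by omega⟩ with hz
  set S : Finset (Fin N) := Finset.univ.erase z with hS
  set n : ℤ := S.gcd b with hn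
  have huniv : (Finset.univ : Finset (Fin N)) = insert z S :=
    (Finset.insert_erase (Finset.mem_univ z)).symm
  have hgcd' : gcd α (gcd (b z) n) = 1 := by
    rw [← Finset.gcd_insert, ← huniv]; exact hgcd
  have hn0 : n ≠ 0 := by
    intro h0
    obtain ⟨j, hjz, hbj⟩ := hb
    exact hbj (Finset.gcd_eq_zero_iff.mp h0 j (Finset.mem_erase.mpr ⟨hjz, Finset.mem_univ j⟩))
  obtain ⟨x, hx⟩ := key α (b z) n hn0 hgcd'
  refine ⟨x, ?_⟩
  rw [huniv, Finset.gcd_insert, Function.update_self]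
  have : S.gcd (Function.update b z (x * α + b z)) = n := by
    refine Finset.gcd_congr rfl (fun j hj => ?_)
    exact Function.update_of_ne (Finset.ne_of_mem_erase hj) _ _
  rw [this]
  exact hx
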